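/- Let n ∈ ℕ, p ∈ (0,1), and let P_p^n = (pδ₁ + (1−p)δ_{−1})^{⊗n} be product measure on {−1,1}ⁿ. Let A ⊆ {−1,1}ⁿ be any event and for i ∈ {1,…,n} let Piv_i(A) be the event that flipping the i-th coordinate changes the indicator of A. Then the map p ↦ P_p^n(A) is differentiable and |d/dp P_p^n(A)| ≤ Σ_{i=1}^n P_p^n(Piv_i(A)). -/

import Mathlib

lemma key5 (n : ℕ) (p : ℝ) (hp0 : 0 < p) (hp1 : p < 1)
    (A : Finset (Fin n → Bool)) (i : Fin n) :
    |∑ ω ∈ A, (∏ k ∈ Finset.univ.erase i, (if ω k then p else 1 - p)) * (if ω i then (1:ℝ) else -1)|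
      ≤ ∑ ω ∈ Finset.univ.filter
            (fun ω : Fin n → Bool => ¬((ω ∈ A) ↔ (Function.update ω i (!ω i) ∈ A))),
          ∏ j, (if ω j then p else 1 - p) := by
  classical
  set g : (Fin n → Bool) → ℝ := fun ω => ∏ k ∈ Finset.univ.erase i, (if ω k then p else 1 - p)
    with hgdef
  have hgupd : ∀ (ω : Fin n → Bool) (b : Bool), g (Function.update ω i b) = g ω := by
    intro ω b
    refine Finset.prod_congr rfl fun k hk => ?_
    rw [Function.update_of_ne (Finset.ne_of_mem_erase hk)]
  have hgnn : ∀ ω, 0 ≤ g ω := by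
    intro ω
    refine Finset.prod_nonneg fun k _ => ?_
    split <;> linarith
  set Piv : Finset (Fin n → Bool) :=
    Finset.univ.filter (fun ω : Fin n → Bool => ¬((ω ∈ A) ↔ (Function.update ω i (!ω i) ∈ A)))
    with hPiv
  have hsym : ∀ ω ∈ Piv, Function.update ω i (!ω i) ∈ Piv := by
    intro ω hω
    simp only [hPiv, Finset.mem_filter, Finset.mem_univ, true_and] at hω ⊢
    have h1 : Function.update (Function.update ω i (!ω i)) i
        (!(Function.update ω i (!ω i)) i) = ω := by
      simp [Function.update_idem]
    rw [h1]
    tauto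
  set T : Finset (Fin n → Bool) := Finset.univ.filter (fun ω : Fin n → Bool => ω i = true)
    with hT
  -- Step 1: rewrite LHS sum as a sum over T
  have h1 : ∑ ω ∈ A, g ω * (if ω i then (1:ℝ) else -1)
      = ∑ η ∈ T, ((if η ∈ A then g η else 0) - (if Function.update η i false ∈ A then g η else 0)) := by
    have hA : ∑ ω ∈ A, g ω * (if ω i then (1:ℝ) else -1)
        = ∑ ω ∈ Finset.univ, (if ω ∈ A then g ω * (if ω i then (1:ℝ) else -1) else 0) := by
      rw [Finset.sum_ite_mem, Finset.univ_inter]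
    rw [hA, ← Finset.sum_filter_add_sum_filter_not Finset.univ (fun ω : Fin n → Bool => ω i = true)]
    have h2 : ∑ ω ∈ Finset.univ.filter (fun ω : Fin n → Bool => ω i = true),
        (if ω ∈ A then g ω * (if ω i then (1:ℝ) else -1) else 0)
        = ∑ η ∈ T, (if η ∈ A then g η else 0) := by
      refine Finset.sum_congr rfl fun ω hω => ?_
      rw [hT, Finset.mem_filter] at hω
      simp [hω.2]
    have h3 : ∑ ω ∈ Finset.univ.filter (fun ω : Fin n → Bool => ¬(ω i = true)),
        (if ω ∈ A then g ω * (if ω i then (1:ℝ) else -1) else 0)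
        = - ∑ η ∈ T, (if Function.update η i false ∈ A then g η else 0) := by
      rw [← Finset.sum_neg_distrib]
      refine Finset.sum_nbij' (fun ω => Function.update ω i true)
        (fun η => Function.update η i false) ?_ ?_ ?_ ?_ ?_
      · intro ω hω
        simp [hT]
      · intro η hη
        simp
      · intro ω hω
        simp only [Finset.mem_filter, Bool.not_eq_true] at hω
        simp [Function.update_idem, ← hω.2, Function.update_eq_self]
      · intro η hη
        simp only [hT, Finset.mem_filter] at hη
        simp [Function.update_idem, ← hη.2, Function.update_eq_self]
      · intro ω hω
        simp only [Finset.mem_filter, Bool.not_eq_true] at hω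
        have : Function.update (Function.update ω i true) i false = ω := by
          simp [Function.update_idem, ← hω.2, Function.update_eq_self]
        rw [this, hgupd]
        simp only [hω.2, Bool.false_eq_true, if_false, mul_neg, mul_one]
        split <;> simp
    rw [h2, h3, Finset.sum_sub_distrib]
    ring
  rw [h1]
  -- Step 2: bound by sum over pivotal configurations in T
  have h4 : |∑ η ∈ T, ((if η ∈ A then g η else 0) - (if Function.update η i false ∈ A then g η else 0))|
      ≤ ∑ η ∈ T, (if η ∈ Piv then g η else 0) := by
    refine (Finset.abs_sum_le_sum_abs _ _).trans (Finset.sum_le_sum fun η hη => ?_)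
    simp only [hT, Finset.mem_filter] at hη
    have hmem : (η ∈ Piv) ↔ ¬((η ∈ A) ↔ (Function.update η i false ∈ A)) := by
      simp [hPiv, hη.2]
    by_cases hA1 : η ∈ A <;> by_cases hA2 : Function.update η i false ∈ A <;>
      simp [hA1, hA2, hmem, abs_of_nonneg (hgnn η)]
  refine h4.trans ?_
  -- Step 3: RHS equals the bound
  have h5 : ∑ ω ∈ Piv, ∏ j, (if ω j then p else 1 - p)
      = ∑ ω ∈ Piv, (if ω i then p else 1 - p) * g ω := by
    refine Finset.sum_congr rfl fun ω _ => ?_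
    rw [hgdef]
    exact (Finset.mul_prod_erase Finset.univ _ (Finset.mem_univ i)).symm
  rw [h5, ← Finset.sum_filter_add_sum_filter_not Piv (fun ω : Fin n → Bool => ω i = true)]
  have h6 : ∑ ω ∈ Piv.filter (fun ω : Fin n → Bool => ¬(ω i = true)),
      (if ω i then p else 1 - p) * g ω
      = ∑ η ∈ Piv.filter (fun ω : Fin n → Bool => ω i = true), (1 - p) * g η := by
    refine Finset.sum_nbij' (fun ω => Function.update ω i true)
      (fun η => Function.update η i false) ?_ ?_ ?_ ?_ ?_
    · intro ω hω
      simp only [Finset.mem_filter, Bool.not_eq_true] at hω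
      have := hsym ω hω.1
      rw [hω.2] at this
      simp only [Finset.mem_filter]
      exact ⟨this, by simp⟩
    · intro η hη
      simp only [Finset.mem_filter] at hη
      have := hsym η hη.1
      rw [hη.2] at this
      simp only [Finset.mem_filter, Bool.not_eq_true]
      exact ⟨this, by simp⟩
    · intro ω hω
      simp only [Finset.mem_filter, Bool.not_eq_true] at hω
      simp [Function.update_idem, ← hω.2, Function.update_eq_self]
    · intro η hη
      simp only [Finset.mem_filter] at hη
      simp [Function.update_idem, ← hη.2, Function.update_eq_self]
    · intro ω hω
      simp only [Finset.mem_filter, Bool.not_eq_true] at hω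
      rw [hgupd]
      simp [hω.2]
  rw [h6, Finset.sum_ite_mem]
  have h7 : T ∩ Piv = Piv.filter (fun ω : Fin n → Bool => ω i = true) := by
    ext ω
    simp only [hT, Finset.mem_inter, Finset.mem_filter, Finset.mem_univ, true_and]
    tauto
  rw [h7, ← Finset.sum_add_distrib]
  refine Finset.sum_le_sum fun ω hω => ?_
  rw [Finset.mem_filter] at hω
  rw [hω.2]
  simp only [if_true]
  have := hgnn ω
  nlinarith

/-- For any event `A ⊆ {−1,1}ⁿ` (configurations encoded as `Fin n → Bool`), the map
`p ↦ P_p^n(A)` is differentiable with `|d/dp P_p^n(A)| ≤ Σ_i P_p^n(Piv_i(A))`, where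
`Piv_i(A)` is the event that flipping coordinate `i` changes membership in `A`. -/
theorem stmt5 (n : ℕ) (p : ℝ) (hp : p ∈ Set.Ioo (0:ℝ) 1)
    (A : Finset (Fin n → Bool)) :
    ∃ d : ℝ,
      HasDerivAt (fun q : ℝ => ∑ ω ∈ A, ∏ i, (if ω i then q else 1 - q)) d p ∧
      |d| ≤ ∑ i : Fin n,
          ∑ ω ∈ Finset.univ.filter
              (fun ω : Fin n → Bool =>
                ¬((ω ∈ A) ↔ (Function.update ω i (!ω i) ∈ A))),
            ∏ j, (if ω j then p else 1 - p) := by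
  classical
  obtain ⟨hp0, hp1⟩ := hp
  refine ⟨∑ ω ∈ A, ∑ j, (∏ k ∈ Finset.univ.erase j, (if ω k then p else 1 - p)) *
      (if ω j then (1:ℝ) else -1), ?_, ?_⟩
  · refine HasDerivAt.fun_sum fun ω _ => ?_
    have h := HasDerivAt.fun_finsetProd (u := (Finset.univ : Finset (Fin n)))
      (f := fun j q => if ω j then q else 1 - q)
      (f' := fun j => if ω j then (1:ℝ) else -1) (x := p) ?_
    · simpa [smul_eq_mul, mul_comm] using h
    · intro j _
      by_cases hj : ω j
      · simpa [hj] using (hasDerivAt_id' p)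
      · simpa [hj] using ((hasDerivAt_id p).const_sub 1)
  · rw [Finset.sum_comm]
    refine (Finset.abs_sum_le_sum_abs _ _).trans (Finset.sum_le_sum fun i _ => ?_)
    exact key5 n p hp0 hp1 A i
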